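/- Let V be a real vector space of finite dimension n ≥ 2 with a nondegenerate symmetric bilinear form g of signature (1, n−1). Let f : V → V be a linear map such that g(v, v) = 0 implies g(f(v), f(v)) = 0 for all v, and such that there exists a timelike vector v₀ (g(v₀, v₀) > 0) with f(v₀) timelike. Then there exists λ > 0 such that g(f(v), f(w)) = λ²·g(v, w) for all v, w ∈ V; that is, f is the composition of a Lorentz transformation with the dilation by λ. -/

import Mathlib

/-- Let `g` be a nondegenerate symmetric bilinear form of signature
`(1, n−1)` on an `n`-dimensional real vector space (`n ≥ 2`). A linear map `f`
mapping the light cone of `g` into itself, and mapping some timelike vector to a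
timelike vector, is the composition of a Lorentz transformation with a dilation:
`g(f v, f w) = λ² g(v, w)` for some `λ > 0`. -/
theorem lightcone_preserving_linear_is_lorentz_dilation
    {V : Type*} [AddCommGroup V] [Module ℝ V]
    {n : ℕ} (hn : 2 ≤ n)
    (g : V →ₗ[ℝ] V →ₗ[ℝ] ℝ)
    (hgsymm : ∀ v w : V, g v w = g w v)
    (e : Module.Basis (Fin n) ℝ V)
    (hsig : ∀ i j, g (e i) (e j) =
      if i = j then (if (i : ℕ) = 0 then 1 else -1) else 0)
    (f : V →ₗ[ℝ] V)
    (hnull : ∀ v : V, g v v = 0 → g (f v) (f v) = 0)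
    (v₀ : V) (hv₀ : 0 < g v₀ v₀) (hfv₀ : 0 < g (f v₀) (f v₀)) :
    ∃ lam : ℝ, 0 < lam ∧ ∀ v w : V, g (f v) (f w) = lam ^ 2 * g v w := by
  have hn0 : 0 < n := by omega
  set i0 : Fin n := ⟨0, hn0⟩ with hi0def
  set c := g (f (e i0)) (f (e i0)) with hc
  have hne0 : ∀ i : Fin n, i ≠ i0 → (i : ℕ) ≠ 0 := by
    intro i h hcontra
    exact h (Fin.ext hcontra)
  have g00 : g (e i0) (e i0) = 1 := by rw [hsig]; simp [hi0def]
  have g0i : ∀ i : Fin n, i ≠ i0 → g (e i0) (e i) = 0 := by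
    intro i hi; rw [hsig]; rw [if_neg (Ne.symm hi)]
  have gii : ∀ i : Fin n, i ≠ i0 → g (e i) (e i) = -1 := by
    intro i hi; rw [hsig]; rw [if_pos rfl, if_neg (hne0 i hi)]
  have gij : ∀ i j : Fin n, i ≠ j → g (e i) (e j) = 0 := by
    intro i j h; rw [hsig, if_neg h]
  -- key1 : cross terms with e0 vanish and diagonal is -c
  have key1 : ∀ i : Fin n, i ≠ i0 →
      g (f (e i0)) (f (e i)) = 0 ∧ g (f (e i)) (f (e i)) = -c := by
    intro i hi
    have hB : g (f (e i0)) (f (e i)) = g (f (e i)) (f (e i0)) := hgsymm _ _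
    have h1 : g (f (e (i0 : Fin n) + e i)) (f (e i0 + e i)) = 0 := by
      apply hnull
      simp only [map_add, LinearMap.add_apply]
      rw [g00, g0i i hi, gii i hi, hgsymm (e i) (e i0), g0i i hi]; ring
    have h2 : g (f (e (i0 : Fin n) - e i)) (f (e i0 - e i)) = 0 := by
      apply hnull
      simp only [map_sub, LinearMap.sub_apply]
      rw [g00, g0i i hi, gii i hi, hgsymm (e i) (e i0), g0i i hi]; ring
    simp only [map_add, map_sub, LinearMap.add_apply, LinearMap.sub_apply] at h1 h2
    constructor <;> linarith
  -- key2 : off-diagonal terms (both ≠ 0) vanish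
  have key2 : ∀ i j : Fin n, i ≠ i0 → j ≠ i0 → i ≠ j →
      g (f (e i)) (f (e j)) = 0 := by
    intro i j hi hj hij
    have s2 : (Real.sqrt 2) * (Real.sqrt 2) = 2 := Real.mul_self_sqrt (by norm_num)
    have h1 : g (f ((Real.sqrt 2) • e (i0 : Fin n) + e i + e j))
        (f ((Real.sqrt 2) • e i0 + e i + e j)) = 0 := by
      apply hnull
      simp only [map_add, map_smul, LinearMap.add_apply, LinearMap.smul_apply,
        smul_eq_mul]
      rw [g00, g0i i hi, g0i j hj, gii i hi, gii j hj, gij i j hij,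
        hgsymm (e i) (e i0), hgsymm (e j) (e i0), hgsymm (e j) (e i),
        g0i i hi, g0i j hj, gij i j hij]
      nlinarith [s2]
    simp only [map_add, map_smul, LinearMap.add_apply, LinearMap.smul_apply,
      smul_eq_mul] at h1
    obtain ⟨h0i, hii⟩ := key1 i hi
    obtain ⟨h0j, hjj⟩ := key1 j hj
    have hBi : g (f (e i)) (f (e i0)) = 0 := (hgsymm _ _).trans h0i
    have hBj : g (f (e j)) (f (e i0)) = 0 := (hgsymm _ _).trans h0j
    have hBji : g (f (e j)) (f (e i)) = g (f (e i)) (f (e j)) := hgsymm _ _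
    rw [h0i, h0j, hBi, hBj, hii, hjj, hBji, ← hc] at h1
    have h2c : Real.sqrt 2 * (Real.sqrt 2 * c + 0 + 0) = 2 * c := by
      rw [add_zero, add_zero, ← mul_assoc, s2]
    linarith [h1, h2c]
  -- key : on all basis pairs
  have key : ∀ i j : Fin n, g (f (e i)) (f (e j)) = c * g (e i) (e j) := by
    intro i j
    by_cases hi : i = i0 <;> by_cases hj : j = i0
    · subst hi; subst hj; rw [g00]; ring
    · subst hi; rw [(key1 j hj).1, g0i j hj]; ring
    · subst hj
      rw [hgsymm (f (e i)), (key1 i hi).1, hgsymm (e i), g0i i hi]; ring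
    · by_cases hij : i = j
      · subst hij; rw [(key1 i hi).2, gii i hi]; ring
      · rw [key2 i j hi hj hij, gij i j hij]; ring
  -- extend to all vectors by bilinearity
  have main : ∀ v w : V, g (f v) (f w) = c * g v w := by
    have heq : (g.compl₁₂ f f) = c • g := by
      apply e.ext; intro i
      apply e.ext; intro j
      simp only [LinearMap.compl₁₂_apply, LinearMap.smul_apply, smul_eq_mul]
      exact key i j
    intro v w
    have := LinearMap.congr_fun (LinearMap.congr_fun heq v) w
    simpa using this
  have hcpos : 0 < c := by
    have h := main v₀ v₀
    nlinarith
  refine ⟨Real.sqrt c, Real.sqrt_pos.2 hcpos, ?_⟩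
  intro v w
  rw [Real.sq_sqrt hcpos.le]
  exact main v w
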